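/- Let G be a finite simple graph and k ≥ 1. If G admits a quantum k-colouring (on ℂ^d for some d ≥ 1, with projectors of possibly varying ranks), then there exist integers d' ≥ 1 and r ≥ 1 such that G admits a quantum k-colouring on ℂ^{d'} in which every projector has rank exactly r, i.e., a rank-r quantum k-colouring. Consequently, χ_q(G) = min_r χ_q^{(r)}(G). -/

import Mathlib

open scoped ComplexConjugate

/-- The standard (conjugate-linear in the first argument) inner product on `ι → ℂ`. -/
noncomputable def cdot {ι : Type} [Fintype ι] (x y : ι → ℂ) : ℂ :=
  ∑ i, conj (x i) * y i

/-- A `k`-dimensional (complex) orthogonal representation of a graph. -/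
def IsOrthRep {V : Type} (G : SimpleGraph V) (k : ℕ) (ψ : V → Fin k → ℂ) : Prop :=
  (∀ v, cdot (ψ v) (ψ v) = 1) ∧ ∀ u v, G.Adj u v → cdot (ψ u) (ψ v) = 0

/-- The orthogonal rank `ξ(G)`: the least `k ≥ 1` admitting a `k`-dimensional
orthogonal representation. -/
noncomputable def orthRank {V : Type} (G : SimpleGraph V) : ℕ :=
  sInf {k | 1 ≤ k ∧ ∃ ψ : V → Fin k → ℂ, IsOrthRep G k ψ}

/-- A quantum `k`-colouring of `G` on `ℂ^d`: projective measurements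
`{E v c}_{c ∈ Fin k}` such that `E u c * E v c = 0` for adjacent `u, v`. -/
def IsQuantumColoring {V : Type} (G : SimpleGraph V) (k d : ℕ)
    (E : V → Fin k → Matrix (Fin d) (Fin d) ℂ) : Prop :=
  (∀ v c, (E v c).IsHermitian) ∧
  (∀ v c, E v c * E v c = E v c) ∧
  (∀ v, ∑ c, E v c = 1) ∧
  ∀ u v, G.Adj u v → ∀ c, E u c * E v c = 0

/-- The quantum chromatic number `χ_q(G)`: the least `k ≥ 1` for which a quantum
`k`-colouring exists on `ℂ^d` for some `d ≥ 1`. -/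
noncomputable def quantumChromaticNumber {V : Type} (G : SimpleGraph V) : ℕ :=
  sInf {k | 1 ≤ k ∧ ∃ d, 1 ≤ d ∧
    ∃ E : V → Fin k → Matrix (Fin d) (Fin d) ℂ, IsQuantumColoring G k d E}

/-- A rank-`r` quantum `k`-colouring: a quantum `k`-colouring on `ℂ^(r*k)` in which
every projector has rank exactly `r`. -/
def IsRankRQuantumColoring {V : Type} (G : SimpleGraph V) (r k : ℕ)
    (E : V → Fin k → Matrix (Fin (r * k)) (Fin (r * k)) ℂ) : Prop :=
  IsQuantumColoring G k (r * k) E ∧ ∀ v c, (E v c).rank = r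

/-- The rank-`r` quantum chromatic number `χ_q^{(r)}(G)`. -/
noncomputable def rankChromaticNumber {V : Type} (G : SimpleGraph V) (r : ℕ) : ℕ :=
  sInf {k | 1 ≤ k ∧ ∃ E : V → Fin k → Matrix (Fin (r * k)) (Fin (r * k)) ℂ,
    IsRankRQuantumColoring G r k E}

/-- The chromatic number of `G` as a natural number: the least `k ≥ 1` for which a
proper `k`-colouring exists. -/
noncomputable def chromNat {V : Type} (G : SimpleGraph V) : ℕ :=
  sInf {k | 1 ≤ k ∧ G.Colorable k}

/-- The clique number `ω(G)`. -/
noncomputable def cliqueNum' {V : Type} (G : SimpleGraph V) : ℕ :=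
  sSup {n | ∃ S : Finset V, G.IsNClique n S}

open Matrix in
lemma trace_eq_rank_aux {n : ℕ} {P : Matrix (Fin n) (Fin n) ℂ}
    (hH : P.IsHermitian) (hI : P * P = P) : P.trace = (P.rank : ℂ) := by
  classical
  set U : Matrix (Fin n) (Fin n) ℂ := (hH.eigenvectorUnitary : Matrix (Fin n) (Fin n) ℂ) with hU
  have hUU : U * star U = 1 := (Matrix.mem_unitaryGroup_iff).mp hH.eigenvectorUnitary.2
  have hUU' : star U * U = 1 := (Matrix.mem_unitaryGroup_iff').mp hH.eigenvectorUnitary.2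
  have hdiag : star U * P * U = diagonal (RCLike.ofReal ∘ hH.eigenvalues) := by
    conv_lhs => rw [hH.spectral_theorem, Unitary.conjStarAlgAut_apply]
    simp only [← mul_assoc]
    rw [hUU', one_mul, mul_assoc, hUU', mul_one]
  have hsq : ∀ i, hH.eigenvalues i = 0 ∨ hH.eigenvalues i = 1 := by
    intro i
    have h2 : (diagonal (RCLike.ofReal ∘ hH.eigenvalues) : Matrix (Fin n) (Fin n) ℂ) *
        diagonal (RCLike.ofReal ∘ hH.eigenvalues) = diagonal (RCLike.ofReal ∘ hH.eigenvalues) := by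
      rw [← hdiag]
      calc (star U * P * U) * (star U * P * U) = star U * (P * (U * star U) * P) * U := by
            noncomm_ring
        _ = star U * P * U := by rw [hUU, mul_one, hI]
    rw [diagonal_mul_diagonal] at h2
    have h4 : (hH.eigenvalues i : ℂ) * (hH.eigenvalues i : ℂ) = (hH.eigenvalues i : ℂ) := by
      have := congrFun (congrFun h2 i) i
      simpa [Matrix.diagonal] using this
    have h5 : (hH.eigenvalues i) * (hH.eigenvalues i) = hH.eigenvalues i := by
      exact_mod_cast h4
    exact IsIdempotentElem.iff_eq_zero_or_one.mp h5
  have htr : P.trace = ∑ i, (hH.eigenvalues i : ℂ) := by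
    conv_lhs => rw [hH.spectral_theorem, Unitary.conjStarAlgAut_apply]
    rw [Matrix.trace_mul_comm, ← mul_assoc, hUU', one_mul, Matrix.trace_diagonal]
    rfl
  rw [htr, hH.rank_eq_card_non_zero_eigs]
  have : ∀ i, ((hH.eigenvalues i : ℝ) : ℂ) = if hH.eigenvalues i ≠ 0 then 1 else 0 := by
    intro i
    rcases hsq i with h | h <;> simp [h]
  rw [Finset.sum_congr rfl fun i _ => this i, Finset.sum_boole, Fintype.card_subtype]


open Matrix in
lemma herm_aux {k d : ℕ} [NeZero k] (M : Fin k → Matrix (Fin d) (Fin d) ℂ)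
    (h : ∀ j, (M j).IsHermitian) : (blockDiagonal M)ᴴ = blockDiagonal M := by
  rw [blockDiagonal_conjTranspose]
  exact congrArg blockDiagonal (funext fun j => h j)

open Matrix in
lemma rankify {V : Type} (G : SimpleGraph V) (k d : ℕ) (hk : 1 ≤ k) (hd : 1 ≤ d)
    (E : V → Fin k → Matrix (Fin d) (Fin d) ℂ) (hE : IsQuantumColoring G k d E) :
    ∃ F : V → Fin k → Matrix (Fin (d * k)) (Fin (d * k)) ℂ, IsRankRQuantumColoring G d k F := by
  classical
  haveI : NeZero k := ⟨by omega⟩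
  obtain ⟨hHerm, hIdem, hSum, hOrth⟩ := hE
  set e : Fin d × Fin k ≃ Fin (d * k) := finProdFinEquiv with he
  have hermF : ∀ v c,
      ((blockDiagonal fun j : Fin k => E v (c + j)).submatrix e.symm e.symm).IsHermitian := by
    intro v c
    rw [isHermitian_submatrix_equiv]
    exact herm_aux _ (fun j => hHerm v (c + j))
  have idemF : ∀ v c,
      ((blockDiagonal fun j : Fin k => E v (c + j)).submatrix e.symm e.symm) *
      ((blockDiagonal fun j : Fin k => E v (c + j)).submatrix e.symm e.symm) =
      ((blockDiagonal fun j : Fin k => E v (c + j)).submatrix e.symm e.symm) := by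
    intro v c
    rw [submatrix_mul_equiv, ← blockDiagonal_mul,
      show (fun j : Fin k => E v (c + j) * E v (c + j)) = fun j => E v (c + j) from
        funext fun j => hIdem v (c + j)]
  refine ⟨fun v c => ((blockDiagonal fun j : Fin k => E v (c + j)).submatrix e.symm e.symm),
    ⟨hermF, idemF, ?_, ?_⟩, ?_⟩
  · -- Sum
    intro v
    have hsub : (∑ c : Fin k, ((blockDiagonal fun j : Fin k => E v (c + j)).submatrix e.symm e.symm))
        = ((∑ c : Fin k, blockDiagonal fun j : Fin k => E v (c + j)).submatrix e.symm e.symm) := by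
      ext i j
      simp [Matrix.sum_apply]
    rw [hsub]
    have hbd : (∑ c : Fin k, blockDiagonal fun j : Fin k => E v (c + j))
        = blockDiagonal (fun j : Fin k => ∑ c : Fin k, E v (c + j)) := by
      ext x y
      obtain ⟨i, j⟩ := x
      obtain ⟨i', j'⟩ := y
      by_cases hjj : j = j'
      · subst hjj
        simp [Matrix.sum_apply, Matrix.blockDiagonal_apply]
      · simp [Matrix.sum_apply, Matrix.blockDiagonal_apply, hjj]
    rw [hbd]
    have hinner : ∀ j : Fin k, (∑ c : Fin k, E v (c + j)) = 1 := by
      intro j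
      rw [← hSum v]
      exact Fintype.sum_equiv (Equiv.addRight j) _ _ (fun c => rfl)
    simp only [hinner]
    rw [show (fun _ : Fin k => (1 : Matrix (Fin d) (Fin d) ℂ)) = (1 : Fin k → Matrix (Fin d) (Fin d) ℂ) from rfl,
      blockDiagonal_one, submatrix_one_equiv]
  · -- Orthogonality
    intro u v huv c
    rw [submatrix_mul_equiv, ← blockDiagonal_mul]
    have h0 : (fun j : Fin k => E u (c + j) * E v (c + j)) = (0 : Fin k → Matrix (Fin d) (Fin d) ℂ) := by
      funext j
      exact hOrth u v huv (c + j)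
    rw [h0, blockDiagonal_zero, submatrix_zero]
    rfl
  · -- rank
    intro v c
    have h1 := trace_eq_rank_aux (hermF v c) (idemF v c)
    have h2 : ((blockDiagonal fun j : Fin k => E v (c + j)).submatrix e.symm e.symm).trace
        = (d : ℂ) := by
      have htr : ((blockDiagonal fun j : Fin k => E v (c + j)).submatrix e.symm e.symm).trace
          = (blockDiagonal fun j : Fin k => E v (c + j)).trace :=
        Fintype.sum_equiv e.symm _ _ (fun i => rfl)
      rw [htr, trace_blockDiagonal]
      have hre : ∑ j : Fin k, (E v (c + j)).trace = ∑ j : Fin k, (E v j).trace :=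
        Fintype.sum_equiv (Equiv.addLeft c) _ _ (fun j => rfl)
      rw [hre, ← Matrix.trace_sum, hSum v, Matrix.trace_one]
      simp
    rw [h2] at h1
    exact_mod_cast h1.symm

open Matrix in
lemma classicalQC {V : Type} [Fintype V] (G : SimpleGraph V) (r : ℕ) (hr : 1 ≤ r) :
    ∃ k, 1 ≤ k ∧ ∃ E : V → Fin k → Matrix (Fin r) (Fin r) ℂ, IsQuantumColoring G k r E := by
  classical
  obtain ⟨C⟩ := (G.colorable_of_fintype).mono (Nat.le_succ (Fintype.card V))
  refine ⟨Fintype.card V + 1, by omega,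
    fun v c => if c = C v then (1 : Matrix (Fin r) (Fin r) ℂ) else 0, ?_, ?_, ?_, ?_⟩
  · intro v c
    dsimp only
    split_ifs
    · exact Matrix.isHermitian_one
    · exact Matrix.isHermitian_zero
  · intro v c; dsimp only; split_ifs <;> simp
  · intro v; simp
  · intro u v huv c
    have hne : C u ≠ C v := C.valid huv
    dsimp only
    split_ifs with h1 h2 <;> simp_all

theorem quantum_colouring_to_rank_r' {V : Type} [Fintype V]
    (G : SimpleGraph V) (k : ℕ) (hk : 1 ≤ k) :
    ((∃ d, 1 ≤ d ∧ ∃ E : V → Fin k → Matrix (Fin d) (Fin d) ℂ,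
        IsQuantumColoring G k d E) →
      ∃ r, 1 ≤ r ∧ ∃ E : V → Fin k → Matrix (Fin (r * k)) (Fin (r * k)) ℂ,
        IsRankRQuantumColoring G r k E) ∧
    quantumChromaticNumber G =
      sInf {m | ∃ r, 1 ≤ r ∧ m = rankChromaticNumber G r} := by
  have part1 : ∀ k', 1 ≤ k' →
      (∃ d, 1 ≤ d ∧ ∃ E : V → Fin k' → Matrix (Fin d) (Fin d) ℂ, IsQuantumColoring G k' d E) →
      ∃ r, 1 ≤ r ∧ ∃ E : V → Fin k' → Matrix (Fin (r * k')) (Fin (r * k')) ℂ,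
        IsRankRQuantumColoring G r k' E := by
    rintro k' hk' ⟨d, hd, E, hE⟩
    exact ⟨d, hd, rankify G k' d hk' hd E hE⟩
  refine ⟨part1 k hk, ?_⟩
  -- Sets
  set S : Set ℕ := {k | 1 ≤ k ∧ ∃ d, 1 ≤ d ∧
    ∃ E : V → Fin k → Matrix (Fin d) (Fin d) ℂ, IsQuantumColoring G k d E} with hS
  -- each rank-r set is nonempty and contained (as colourings) in S
  have hSr_mem : ∀ r, 1 ≤ r → ∃ k', k' ∈ {k' | 1 ≤ k' ∧
      ∃ E : V → Fin k' → Matrix (Fin (r * k')) (Fin (r * k')) ℂ,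
        IsRankRQuantumColoring G r k' E} := by
    intro r hr
    obtain ⟨k', hk', E, hE⟩ := classicalQC G r hr
    obtain ⟨F, hF⟩ := rankify G k' r hk' hr E hE
    exact ⟨k', hk', F, hF⟩
  have hsub : ∀ r, 1 ≤ r → ∀ k', (1 ≤ k' ∧
      ∃ E : V → Fin k' → Matrix (Fin (r * k')) (Fin (r * k')) ℂ,
        IsRankRQuantumColoring G r k' E) → k' ∈ S := by
    rintro r hr k' ⟨hk', E, hE⟩
    exact ⟨hk', r * k', Nat.one_le_iff_ne_zero.mpr (by positivity), E, hE.1⟩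
  have hSne : S.Nonempty := by
    obtain ⟨k', hk', E, hE⟩ := classicalQC G 1 le_rfl
    exact ⟨k', hk', 1, le_rfl, E, hE⟩
  have hq : quantumChromaticNumber G = sInf S := rfl
  have hqmem : quantumChromaticNumber G ∈ S := by
    rw [hq]; exact Nat.sInf_mem hSne
  -- rankChromaticNumber facts
  have hrank_mem : ∀ r, 1 ≤ r → rankChromaticNumber G r ∈ {k' | 1 ≤ k' ∧
      ∃ E : V → Fin k' → Matrix (Fin (r * k')) (Fin (r * k')) ℂ,
        IsRankRQuantumColoring G r k' E} := by
    intro r hr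
    exact Nat.sInf_mem (hSr_mem r hr)
  have hrank_ge : ∀ r, 1 ≤ r → quantumChromaticNumber G ≤ rankChromaticNumber G r := by
    intro r hr
    rw [hq]
    exact Nat.sInf_le (hsub r hr _ (hrank_mem r hr))
  -- quantum chromatic number is achieved by some rank
  obtain ⟨hq1, dq, hdq, Eq, hEq⟩ := hqmem
  obtain ⟨r0, hr0, F0, hF0⟩ := part1 _ hq1 ⟨dq, hdq, Eq, hEq⟩
  have hle0 : rankChromaticNumber G r0 ≤ quantumChromaticNumber G :=
    Nat.sInf_le ⟨hq1, F0, hF0⟩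
  have heq0 : rankChromaticNumber G r0 = quantumChromaticNumber G :=
    le_antisymm hle0 (hrank_ge r0 hr0)
  apply le_antisymm
  · refine le_csInf ⟨rankChromaticNumber G r0, ?_⟩ ?_
    · show ∃ r, 1 ≤ r ∧ rankChromaticNumber G r0 = rankChromaticNumber G r
      exact ⟨r0, hr0, rfl⟩
    · rintro m ⟨r, hr, rfl⟩
      exact hrank_ge r hr
  · exact Nat.sInf_le ⟨r0, hr0, heq0.symm⟩

/-- a quantum `k`-colouring (with projectors of possibly varying
ranks) can be converted into a rank-`r` quantum `k`-colouring for some `r ≥ 1`;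
consequently `χ_q(G) = min_r χ_q^{(r)}(G)`. -/
theorem quantum_colouring_to_rank_r {V : Type} [Fintype V]
    (G : SimpleGraph V) (k : ℕ) (hk : 1 ≤ k) :
    ((∃ d, 1 ≤ d ∧ ∃ E : V → Fin k → Matrix (Fin d) (Fin d) ℂ,
        IsQuantumColoring G k d E) →
      ∃ r, 1 ≤ r ∧ ∃ E : V → Fin k → Matrix (Fin (r * k)) (Fin (r * k)) ℂ,
        IsRankRQuantumColoring G r k E) ∧
    quantumChromaticNumber G =
      sInf {m | ∃ r, 1 ≤ r ∧ m = rankChromaticNumber G r} := by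
  exact quantum_colouring_to_rank_r' G k hk
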